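/- arXiv:1807.01004 — 3 statements merged into one kernel-verified Lean document; each statement's English description precedes it below -/
import Mathlib

section
/- Enforcement Soundness: for every system p and every closed formula φ ∈ SHMLnf, if φ is satisfiable then the instrumented system ⟦φ⟧e[p] satisfies φ, i.e., φ ∈ Sat implies ⟦φ⟧e[p] ∈ ⟦φ⟧. -/
set_option autoImplicit false

/-- A labelled transition system over observable actions `Act`;
`none` plays the role of the silent action τ. -/
structure LTS (Act : Type) where
  S : Type
  Tr : S → Option Act → S → Prop

namespace Enf

open scoped Classical

variable {Act : Type}

/-- Zero or more silent steps. -/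
def TauStar (L : LTS Act) : L.S → L.S → Prop :=
  Relation.ReflTransGen (fun p q => L.Tr p none q)

/-- The weak transition `p =a=> q`. -/
def WStep (L : LTS Act) (p : L.S) (a : Act) (q : L.S) : Prop :=
  ∃ p₁ p₂, TauStar L p p₁ ∧ L.Tr p₁ (some a) p₂ ∧ TauStar L p₂ q

/-- Weak trace `p =t=> q`. -/
inductive WTrace (L : LTS Act) : L.S → List Act → L.S → Prop
  | nil {p q : L.S} : TauStar L p q → WTrace L p [] q
  | cons {p r q : L.S} {a : Act} {t : List Act} :
      WStep L p a r → WTrace L r t q → WTrace L p (a :: t) q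

/-- SHML formulas: truth, falsehood, fixpoint variables, finite conjunctions,
modalities `[η]φ` (a guard set of actions together with an action-indexed
continuation, representing the symbolic action and the matching substitutions),
and greatest fixpoints. -/
inductive Frm (Act : Type) : Type where
  | tt : Frm Act
  | ff : Frm Act
  | var : ℕ → Frm Act
  | conj : (n : ℕ) → (Fin n → Frm Act) → Frm Act
  | box : Set Act → (Act → Frm Act) → Frm Act
  | max : ℕ → Frm Act → Frm Act

namespace Frm

/-- Free fixpoint variables. -/
def fv : Frm Act → Set ℕ
  | .tt => ∅
  | .ff => ∅
  | .var X => {X}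
  | .conj _ f => ⋃ i, fv (f i)
  | .box G k => ⋃ a ∈ G, fv (k a)
  | .max X φ => fv φ \ {X}

def Closed (φ : Frm Act) : Prop := fv φ = ∅

/-- Substitution `φ[ψ/X]` (of a closed formula `ψ`). -/
def subst : Frm Act → ℕ → Frm Act → Frm Act
  | .tt, _, _ => .tt
  | .ff, _, _ => .ff
  | .var Y, X, ψ => if Y = X then ψ else .var Y
  | .conj n f, X, ψ => .conj n (fun i => subst (f i) X ψ)
  | .box G k, X, ψ => .box G (fun a => subst (k a) X ψ)
  | .max Y φ, X, ψ => if Y = X then .max Y φ else .max Y (subst φ X ψ)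

/-- The normal-form fragment SHMLnf: conjunctions are conjunctions of
modalities with pairwise-disjoint guards, and each greatest fixpoint binds a
variable occurring free in its body. -/
inductive IsNF : Frm Act → Prop
  | tt : IsNF .tt
  | ff : IsNF .ff
  | var (X : ℕ) : IsNF (.var X)
  | conj (n : ℕ) (G : Fin n → Set Act) (k : Fin n → Act → Frm Act)
      (hdisj : ∀ i j : Fin n, i ≠ j → ∀ a : Act, a ∈ G i → a ∉ G j)
      (hk : ∀ i : Fin n, ∀ a ∈ G i, IsNF (k i a)) :
      IsNF (.conj n fun i => .box (G i) (k i))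
  | max (X : ℕ) (φ : Frm Act) (hfree : X ∈ fv φ) (hφ : IsNF φ) : IsNF (.max X φ)

/-- `gvar X φ`: the variable `X` does not occur unguarded (i.e. outside every
modality) in `φ`. -/
def gvar (X : ℕ) : Frm Act → Prop
  | .tt => True
  | .ff => True
  | .var Y => Y ≠ X
  | .conj _ f => ∀ i, gvar X (f i)
  | .box _ _ => True
  | .max Y φ => Y = X ∨ gvar X φ

/-- A formula is guarded if every occurrence of a fixpoint variable lies
beneath a modality. -/
def Guarded : Frm Act → Prop
  | .tt => True
  | .ff => True
  | .var _ => True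
  | .conj _ f => ∀ i, Guarded (f i)
  | .box G k => ∀ a ∈ G, Guarded (k a)
  | .max X φ => gvar X φ ∧ Guarded φ

/-- Number of top-level greatest-fixpoint binders. -/
def topMax : Frm Act → ℕ
  | .max _ φ => topMax φ + 1
  | _ => 0

end Frm

/-- Denotational semantics of (possibly open) formulas, relative to an
environment mapping fixpoint variables to sets of states; `max` is interpreted
as the greatest fixpoint of the induced monotone map. -/
def sem (L : LTS Act) : Frm Act → (ℕ → Set L.S) → Set L.S
  | .tt, _ => Set.univ
  | .ff, _ => ∅
  | .var X, ρ => ρ X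
  | .conj _ f, ρ => ⋂ i, sem L (f i) ρ
  | .box G k, ρ => {p | ∀ a ∈ G, ∀ q, WStep L p a q → q ∈ sem L (k a) ρ}
  | .max X φ, ρ => ⋃₀ {S | S ⊆ sem L φ (Function.update ρ X S)}

/-- Semantics of closed formulas. -/
def Sem (L : LTS Act) (φ : Frm Act) : Set L.S := sem L φ fun _ => ∅

/-- Satisfiability. -/
def SatIn (L : LTS Act) (φ : Frm Act) : Prop := (Sem L φ).Nonempty

/-- The violation relation `p ⊨v^t φ`, defined as the least relation closed
under the given rules. -/
inductive Viol (L : LTS Act) : L.S → List Act → Frm Act → Prop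
  | ff (p : L.S) : Viol L p [] .ff
  | conj {p : L.S} {t : List Act} {n : ℕ} {f : Fin n → Frm Act} (j : Fin n) :
      Viol L p t (f j) → Viol L p t (.conj n f)
  | box {p p' : L.S} {t : List Act} {a : Act} {G : Set Act} {k : Act → Frm Act} :
      a ∈ G → WStep L p a p' → Viol L p' t (k a) → Viol L p (a :: t) (.box G k)
  | max {p : L.S} {t : List Act} {X : ℕ} {φ : Frm Act} :
      Viol L p t (Frm.subst φ X (.max X φ)) → Viol L p t (.max X φ)

/-- Transducers (enforcement monitors): identity, symbolic transformation
prefixes (a guard set of extended input actions, with `none` standing for the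
insertion pattern •, an output per matched input, with `none` standing for τ,
and a continuation per matched input), finite selections, recursion, and
recursion variables. -/
inductive Trn (Act : Type) : Type where
  | id : Trn Act
  | prf : Set (Option Act) → (Option Act → Option Act) → (Option Act → Trn Act) → Trn Act
  | sel : (n : ℕ) → (Fin n → Trn Act) → Trn Act
  | fix : ℕ → Trn Act → Trn Act
  | var : ℕ → Trn Act

namespace Trn

def tsubst : Trn Act → ℕ → Trn Act → Trn Act
  | .id, _, _ => .id
  | .prf G out k, x, s => .prf G out fun γ => tsubst (k γ) x s
  | .sel n f, x, s => .sel n fun i => tsubst (f i) x s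
  | .fix y e, x, s => if y = x then .fix y e else .fix y (tsubst e x s)
  | .var y, x, s => if y = x then s else .var y

end Trn

/-- Transducer transitions: labels are pairs (input, output) where input
`none` is the insertion pattern • and output `none` is τ. -/
inductive TStep : Trn Act → Option Act × Option Act → Trn Act → Prop
  | id (a : Act) : TStep .id (some a, some a) .id
  | prf {G : Set (Option Act)} {out : Option Act → Option Act}
      {k : Option Act → Trn Act} {γ : Option Act} (h : γ ∈ G) :
      TStep (.prf G out k) (γ, out γ) (k γ)
  | sel {n : ℕ} {f : Fin n → Trn Act} {l : Option Act × Option Act}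
      {e' : Trn Act} (i : Fin n) (h : TStep (f i) l e') :
      TStep (.sel n f) l e'
  | fix {x : ℕ} {e : Trn Act} {l : Option Act × Option Act} {e' : Trn Act}
      (h : TStep (Trn.tsubst e x (.fix x e)) l e') :
      TStep (.fix x e) l e'

/-- Instrumentation of a transducer on a system. -/
inductive IStep (L : LTS Act) : Trn Act × L.S → Option Act → Trn Act × L.S → Prop
  | trn {e e' : Trn Act} {p p' : L.S} {a : Act} {μ : Option Act} :
      L.Tr p (some a) p' → TStep e (some a, μ) e' → IStep L (e, p) μ (e', p')
  | asy {e : Trn Act} {p p' : L.S} :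
      L.Tr p none p' → IStep L (e, p) none (e, p')
  | ins {e e' : Trn Act} {p : L.S} {μ : Option Act} :
      TStep e (none, μ) e' → IStep L (e, p) μ (e', p)
  | ter {e : Trn Act} {p p' : L.S} {a : Act} :
      L.Tr p (some a) p' →
      (∀ μ e', ¬ TStep e (some a, μ) e') →
      (∀ μ e', ¬ TStep e (none, μ) e') →
      IStep L (e, p) (some a) (Trn.id, p')

/-- The LTS of monitored systems `e[p]`. -/
def instLTS (L : LTS Act) : LTS Act := ⟨Trn Act × L.S, IStep L⟩

/-- Strong bisimulations between (the state spaces of) two LTSs. -/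
def IsBisim (L₁ L₂ : LTS Act) (R : L₁.S → L₂.S → Prop) : Prop :=
  ∀ s r, R s r →
    (∀ μ s', L₁.Tr s μ s' → ∃ r', L₂.Tr r μ r' ∧ R s' r') ∧
    (∀ μ r', L₂.Tr r μ r' → ∃ s', L₁.Tr s μ s' ∧ R s' r')

/-- Strong bisimilarity. -/
def Bisim (L₁ L₂ : LTS Act) (s : L₁.S) (r : L₂.S) : Prop :=
  ∃ R, IsBisim L₁ L₂ R ∧ R s r

/-- The synthesis function `⟦-⟧e` from SHMLnf formulas to transducers:
formula variable `X` becomes monitor variable `X+1`; `tt` and `ff` become the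
identity monitor; `max X.φ` becomes the corresponding recursive monitor; and a
normalised conjunction of modalities becomes a recursive selection (on the
fresh variable `0`) of symbolic prefixes that suppress (output τ, continue as
the recursion variable) actions whose continuation formula is `ff` and pass
through all other matched actions, continuing with the synthesis of the
respective continuation formula. -/
noncomputable def synth : Frm Act → Trn Act
  | .tt => .id
  | .ff => .id
  | .var X => .var (X + 1)
  | .max X φ => .fix (X + 1) (synth φ)
  | .box G k =>
      .prf {γ | ∃ a ∈ G, γ = some a}
        (fun γ =>
          match γ with
          | some a => if k a = Frm.ff then none else some a
          | none => none)
        (fun γ =>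
          match γ with
          | some a => if k a = Frm.ff then Trn.var 0 else synth (k a)
          | none => .id)
  | .conj n f => .fix 0 (.sel n fun i => synth (f i))

/-- Fuelled residual function (the fuel is consumed by fixpoint unfoldings;
on guarded closed SHMLnf formulas `topMax φ + 1` units of fuel suffice). -/
noncomputable def afterFuel : ℕ → Frm Act → Act → Frm Act
  | 0, _, _ => .tt
  | n + 1, φ, a =>
    match φ with
    | .max X ψ => afterFuel n (Frm.subst ψ X (.max X ψ)) a
    | .conj m f =>
        if h : ∃ i : Fin m, ∃ G : Set Act, ∃ k : Act → Frm Act,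
            f i = Frm.box G k ∧ a ∈ G
        then h.choose_spec.choose_spec.choose a
        else .tt
    | ψ => ψ

/-- The residual `after(φ, a)` of a guarded closed SHMLnf formula. -/
noncomputable def after (φ : Frm Act) (a : Act) : Frm Act :=
  afterFuel (Frm.topMax φ + 1) φ a

/-- Satisfaction relations (the coinductive rules of `⊨s`). -/
def IsSatRel (L : LTS Act) (R : L.S → Frm Act → Prop) : Prop :=
  (∀ p, ¬ R p .ff) ∧
  (∀ p (n : ℕ) (f : Fin n → Frm Act), R p (.conj n f) → ∀ i, R p (f i)) ∧
  (∀ p (G : Set Act) (k : Act → Frm Act), R p (.box G k) →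
      ∀ a ∈ G, ∀ q, WStep L p a q → R q (k a)) ∧
  (∀ p (X : ℕ) (φ : Frm Act), R p (.max X φ) → R p (Frm.subst φ X (.max X φ)))

/-- The largest satisfaction relation `⊨s`. -/
def SatCo (L : LTS Act) (p : L.S) (φ : Frm Act) : Prop :=
  ∃ R, IsSatRel L R ∧ R p φ



section Soundness

open Frm

/-- Free variables including "junk" (off-guard) continuations of boxes. -/
def allfv : Frm Act → Set ℕ
  | .tt => ∅
  | .ff => ∅
  | .var X => {X}
  | .conj _ f => ⋃ i, allfv (f i)
  | .box _ k => ⋃ a, allfv (k a)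
  | .max X φ => allfv φ \ {X}

/-- Simultaneous (tidying) substitution. -/
noncomputable def applySub : Frm Act → (ℕ → Frm Act) → Frm Act
  | .tt, _ => .tt
  | .ff, _ => .ff
  | .var X, σ => σ X
  | .conj n f, σ => .conj n fun i => applySub (f i) σ
  | .box G k, σ => .box G fun a => if a ∈ G then applySub (k a) σ else .tt
  | .max X φ, σ => .max X (applySub φ (Function.update σ X (.var X)))

/-- Guard-equivalence: equality up to off-guard continuations. -/
inductive GEq : Frm Act → Frm Act → Prop
  | tt : GEq .tt .tt
  | ff : GEq .ff .ff
  | var (X : ℕ) : GEq (.var X) (.var X)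
  | conj {n : ℕ} {f g : Fin n → Frm Act} :
      (∀ i, GEq (f i) (g i)) → GEq (.conj n f) (.conj n g)
  | box {G : Set Act} {k k' : Act → Frm Act} :
      (∀ a ∈ G, GEq (k a) (k' a)) → GEq (.box G k) (.box G k')
  | max {X : ℕ} {b b' : Frm Act} : GEq b b' → GEq (.max X b) (.max X b')

lemma subst_eq_of_not_allfv {φ : Frm Act} {X : ℕ} {θ : Frm Act}
    (h : X ∉ allfv φ) : Frm.subst φ X θ = φ := by
  induction φ with
  | tt => rfl
  | ff => rfl
  | var Y =>
    have hXY : ¬ X = Y := by simpa [allfv] using h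
    simp only [Frm.subst]
    rw [if_neg (fun hc => hXY hc.symm)]
  | conj n f ih =>
    simp only [allfv, Set.mem_iUnion, not_exists] at h
    simp only [Frm.subst]
    congr 1
    funext i
    exact ih i (h i)
  | box G k ih =>
    simp only [allfv, Set.mem_iUnion, not_exists] at h
    simp only [Frm.subst]
    congr 1
    funext a
    exact ih a (h a)
  | max Y ψ ih =>
    by_cases hYX : Y = X
    · simp [Frm.subst, hYX]
    · simp only [allfv, Set.mem_diff, Set.mem_singleton_iff, not_and, not_not] at h
      have hX : X ∉ allfv ψ := fun hc => hYX (h hc).symm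
      simp [Frm.subst, hYX, ih hX]

lemma fv_subst_subset (φ : Frm Act) (X : ℕ) (θ : Frm Act) :
    fv (Frm.subst φ X θ) ⊆ (fv φ \ {X}) ∪ fv θ := by
  induction φ with
  | tt => intro z hz; simp [Frm.subst, fv] at hz
  | ff => intro z hz; simp [Frm.subst, fv] at hz
  | var Y =>
    intro z hz
    by_cases hYX : Y = X
    · simp only [Frm.subst, if_pos hYX] at hz
      exact Or.inr hz
    · simp only [Frm.subst, if_neg hYX, fv, Set.mem_singleton_iff] at hz
      subst hz
      exact Or.inl ⟨rfl, by simpa using hYX⟩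
  | conj n f ih =>
    intro z hz
    simp only [Frm.subst, fv, Set.mem_iUnion] at hz
    obtain ⟨i, hi⟩ := hz
    rcases ih i hi with ⟨h1, h2⟩ | h
    · exact Or.inl ⟨Set.mem_iUnion.2 ⟨i, h1⟩, h2⟩
    · exact Or.inr h
  | box G k ih =>
    intro z hz
    simp only [Frm.subst, fv, Set.mem_iUnion] at hz
    obtain ⟨a, ha, hi⟩ := hz
    rcases ih a hi with ⟨h1, h2⟩ | h
    · exact Or.inl ⟨by simp only [fv, Set.mem_iUnion]; exact ⟨a, ha, h1⟩, h2⟩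
    · exact Or.inr h
  | max Y ψ ih =>
    intro z hz
    by_cases hYX : Y = X
    · subst hYX
      simp only [Frm.subst, if_pos rfl, fv, Set.mem_diff, Set.mem_singleton_iff] at hz
      exact Or.inl ⟨hz, hz.2⟩
    · simp only [Frm.subst, if_neg hYX, fv, Set.mem_diff, Set.mem_singleton_iff] at hz
      obtain ⟨hz1, hz2⟩ := hz
      rcases ih hz1 with ⟨h1, h2⟩ | h
      · exact Or.inl ⟨⟨h1, hz2⟩, h2⟩
      · exact Or.inr h

lemma subset_fv_subst (φ : Frm Act) (X : ℕ) (θ : Frm Act) :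
    fv φ \ {X} ⊆ fv (Frm.subst φ X θ) := by
  induction φ with
  | tt => intro z hz; simp [fv] at hz
  | ff => intro z hz; simp [fv] at hz
  | var Y =>
    intro z hz
    obtain ⟨hz1, hz2⟩ := hz
    simp only [fv, Set.mem_singleton_iff] at hz1
    subst hz1
    have hzX : ¬ z = X := by simpa using hz2
    simp [Frm.subst, hzX, fv]
  | conj n f ih =>
    intro z hz
    obtain ⟨hz1, hz2⟩ := hz
    simp only [fv, Set.mem_iUnion] at hz1
    obtain ⟨i, hi⟩ := hz1
    simp only [Frm.subst, fv, Set.mem_iUnion]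
    exact ⟨i, ih i ⟨hi, hz2⟩⟩
  | box G k ih =>
    intro z hz
    obtain ⟨hz1, hz2⟩ := hz
    simp only [fv, Set.mem_iUnion] at hz1
    obtain ⟨a, ha, hi⟩ := hz1
    simp only [Frm.subst, fv, Set.mem_iUnion]
    exact ⟨a, ha, ih a ⟨hi, hz2⟩⟩
  | max Y ψ ih =>
    intro z hz
    obtain ⟨hz1, hz2⟩ := hz
    simp only [fv, Set.mem_diff, Set.mem_singleton_iff] at hz1
    obtain ⟨hz1, hzY⟩ := hz1
    by_cases hYX : Y = X
    · simp only [Frm.subst, if_pos hYX, fv, Set.mem_diff, Set.mem_singleton_iff]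
      exact ⟨hz1, hzY⟩
    · simp only [Frm.subst, if_neg hYX, fv, Set.mem_diff, Set.mem_singleton_iff]
      exact ⟨ih ⟨hz1, hz2⟩, hzY⟩

lemma subst_eq_ff_iff {φ : Frm Act} {X : ℕ} {θ : Frm Act} (hθ : θ ≠ .ff) :
    Frm.subst φ X θ = .ff ↔ φ = .ff := by
  cases φ with
  | tt => simp [Frm.subst]
  | ff => simp [Frm.subst]
  | var Y =>
    by_cases hYX : Y = X
    · simp [Frm.subst, hYX, hθ]
    · simp [Frm.subst, hYX]
  | conj n f => simp [Frm.subst]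
  | box G k => simp [Frm.subst]
  | max Y ψ =>
    by_cases hYX : Y = X
    · simp [Frm.subst, hYX]
    · simp [Frm.subst, hYX]

lemma isNF_subst {φ θ : Frm Act} {X : ℕ} (hφ : IsNF φ) (hθ : IsNF θ) :
    IsNF (Frm.subst φ X θ) := by
  induction hφ with
  | tt => exact IsNF.tt
  | ff => exact IsNF.ff
  | var Y =>
    by_cases hYX : Y = X
    · simpa [Frm.subst, hYX] using hθ
    · simp only [Frm.subst, if_neg hYX]
      exact IsNF.var Y
  | conj n G k hdisj hk ih =>
    show IsNF (.conj n fun i => .box (G i) (fun a => Frm.subst (k i a) X θ))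
    exact IsNF.conj n G _ hdisj (fun i a ha => ih i a ha)
  | max Y ψ hfree hψ ih =>
    by_cases hYX : Y = X
    · simp only [Frm.subst, if_pos hYX]
      exact IsNF.max Y ψ hfree hψ
    · simp only [Frm.subst, if_neg hYX]
      refine IsNF.max Y _ ?_ ih
      exact subset_fv_subst ψ X θ ⟨hfree, by simpa using hYX⟩

lemma allfv_applySub (φ : Frm Act) (σ : ℕ → Frm Act) :
    allfv (applySub φ σ) ⊆ ⋃ Y ∈ fv φ, allfv (σ Y) := by
  induction φ generalizing σ with
  | tt => intro z hz; simp [applySub, allfv] at hz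
  | ff => intro z hz; simp [applySub, allfv] at hz
  | var Y =>
    intro z hz
    simp only [fv, Set.mem_iUnion]
    exact ⟨Y, rfl, hz⟩
  | conj n f ih =>
    intro z hz
    simp only [applySub, allfv, Set.mem_iUnion] at hz
    obtain ⟨i, hi⟩ := hz
    have := ih i σ hi
    simp only [Set.mem_iUnion] at this ⊢
    obtain ⟨Y, hY, hzY⟩ := this
    exact ⟨Y, by simp only [fv, Set.mem_iUnion]; exact ⟨i, hY⟩, hzY⟩
  | box G k ih =>
    intro z hz
    simp only [applySub, allfv, Set.mem_iUnion] at hz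
    obtain ⟨a, ha⟩ := hz
    by_cases hG : a ∈ G
    · rw [if_pos hG] at ha
      have := ih a σ ha
      simp only [Set.mem_iUnion] at this ⊢
      obtain ⟨Y, hY, hzY⟩ := this
      exact ⟨Y, by simp only [fv, Set.mem_iUnion]; exact ⟨a, hG, hY⟩, hzY⟩
    · rw [if_neg hG] at ha
      simp [allfv] at ha
  | max Y ψ ih =>
    intro z hz
    simp only [applySub, allfv, Set.mem_diff, Set.mem_singleton_iff] at hz
    obtain ⟨hz1, hzY⟩ := hz
    have := ih (Function.update σ Y (.var Y)) hz1
    simp only [Set.mem_iUnion] at this ⊢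
    obtain ⟨W, hW, hzW⟩ := this
    by_cases hWY : W = Y
    · subst hWY
      rw [Function.update_self] at hzW
      simp [allfv] at hzW
      exact absurd hzW hzY
    · rw [Function.update_of_ne hWY] at hzW
      exact ⟨W, by simp only [fv, Set.mem_diff, Set.mem_singleton_iff]; exact ⟨hW, hWY⟩, hzW⟩

lemma subcomp (ψ : Frm Act) (σ : ℕ → Frm Act) (X : ℕ) (θ : Frm Act)
    (h1 : σ X = .var X) (h2 : ∀ Y, Y ≠ X → X ∉ allfv (σ Y)) :
    Frm.subst (applySub ψ σ) X θ = applySub ψ (Function.update σ X θ) := by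
  induction ψ generalizing σ with
  | tt => rfl
  | ff => rfl
  | var Y =>
    by_cases hYX : Y = X
    · subst hYX
      show Frm.subst (σ Y) Y θ = Function.update σ Y θ Y
      rw [h1, Function.update_self]
      simp [Frm.subst]
    · show Frm.subst (σ Y) X θ = Function.update σ X θ Y
      rw [Function.update_of_ne hYX]
      exact subst_eq_of_not_allfv (h2 Y hYX)
  | conj n f ih =>
    simp only [applySub, Frm.subst]
    congr 1
    funext i
    exact ih i σ h1 h2
  | box G k ih =>
    simp only [applySub, Frm.subst]
    congr 1
    funext a
    by_cases hG : a ∈ G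
    · simp only [if_pos hG]
      exact ih a σ h1 h2
    · simp only [if_neg hG]
      rfl
  | max Y ψ' ih =>
    by_cases hYX : Y = X
    · subst hYX
      show Frm.subst (.max Y (applySub ψ' (Function.update σ Y (.var Y)))) Y θ
          = .max Y (applySub ψ' (Function.update (Function.update σ Y θ) Y (.var Y)))
      rw [Function.update_idem]
      simp [Frm.subst]
    · have hXY : X ≠ Y := fun h => hYX h.symm
      show Frm.subst (.max Y (applySub ψ' (Function.update σ Y (.var Y)))) X θ
          = .max Y (applySub ψ' (Function.update (Function.update σ X θ) Y (.var Y)))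
      simp only [Frm.subst, if_neg hYX]
      rw [ih (Function.update σ Y (.var Y))
        (by rw [Function.update_of_ne hXY]; exact h1)
        (fun Z hZ => by
          by_cases hZY : Z = Y
          · subst hZY
            rw [Function.update_self]
            simp only [allfv, Set.mem_singleton_iff]
            exact hXY
          · rw [Function.update_of_ne hZY]
            exact h2 Z hZ)]
      rw [Function.update_comm hXY.symm]

lemma geq_applySub (φ : Frm Act) (σ : ℕ → Frm Act) (h : ∀ Y, σ Y = .var Y) :
    GEq (applySub φ σ) φ := by
  induction φ generalizing σ with
  | tt => exact GEq.tt
  | ff => exact GEq.ff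
  | var Y => rw [show applySub (Frm.var Y) σ = σ Y from rfl, h Y]; exact GEq.var Y
  | conj n f ih => exact GEq.conj (fun i => ih i σ h)
  | box G k ih =>
    refine GEq.box (fun a ha => ?_)
    show GEq (if a ∈ G then applySub (k a) σ else .tt) (k a)
    rw [if_pos ha]
    exact ih a σ h
  | max Y ψ ih =>
    refine GEq.max (ih (Function.update σ Y (.var Y)) (fun Z => ?_))
    by_cases hZ : Z = Y
    · subst hZ; exact Function.update_self ..
    · rw [Function.update_of_ne hZ]; exact h Z

lemma geq_subst {ψ χ θψ θχ : Frm Act} {X : ℕ} (h : GEq ψ χ) (hθ : GEq θψ θχ) :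
    GEq (Frm.subst ψ X θψ) (Frm.subst χ X θχ) := by
  induction h with
  | tt => exact GEq.tt
  | ff => exact GEq.ff
  | var Y =>
    by_cases hYX : Y = X
    · simpa [Frm.subst, hYX] using hθ
    · simp only [Frm.subst, if_neg hYX]
      exact GEq.var Y
  | conj hfg ih => exact GEq.conj (fun i => ih i)
  | box hkk ih => exact GEq.box (fun a ha => ih a ha)
  | @max Y b b' hb ih =>
    by_cases hYX : Y = X
    · simp only [Frm.subst, if_pos hYX]
      exact GEq.max hb
    · simp only [Frm.subst, if_neg hYX]
      exact GEq.max ih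


lemma isNF_conj_inv {n : ℕ} {f : Fin n → Frm Act} (h : IsNF (.conj n f)) :
    ∃ (G : Fin n → Set Act) (k : Fin n → Act → Frm Act),
      f = (fun j => Frm.box (G j) (k j)) ∧
      (∀ j₁ j₂ : Fin n, j₁ ≠ j₂ → ∀ a ∈ G j₁, a ∉ G j₂) ∧
      (∀ j : Fin n, ∀ a ∈ G j, IsNF (k j a)) := by
  cases h with
  | conj n G k hdisj hk => exact ⟨G, k, rfl, hdisj, hk⟩

lemma isNF_max_inv {X : ℕ} {b : Frm Act} (h : IsNF (.max X b)) :
    X ∈ fv b ∧ IsNF b := by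
  cases h with
  | max X b hfree hb => exact ⟨hfree, hb⟩

lemma isNF_box_false {G : Set Act} {k : Act → Frm Act} (h : IsNF (.box G k)) : False := by
  cases h

/- ############ monitor lemmas ############ -/

lemma tsubst_synth_zero {χ : Frm Act} (h : IsNF χ) (s : Trn Act) :
    Trn.tsubst (synth χ) 0 s = synth χ := by
  induction h with
  | tt => rfl
  | ff => rfl
  | var Y =>
    show Trn.tsubst (.var (Y+1)) 0 s = .var (Y+1)
    simp [Trn.tsubst]
  | conj n G k hdisj hk =>
    show Trn.tsubst (.fix 0 _) 0 s = .fix 0 _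
    simp [Trn.tsubst]
  | max Y ψ hfree hψ ih =>
    show Trn.tsubst (.fix (Y+1) (synth ψ)) 0 s = .fix (Y+1) (synth ψ)
    simp [Trn.tsubst, ih]

lemma tsubst_synth (χ : Frm Act) (X : ℕ) {θ : Frm Act} (hθ : θ ≠ .ff) :
    Trn.tsubst (synth χ) (X+1) (synth θ) = synth (Frm.subst χ X θ) := by
  induction χ with
  | tt => rfl
  | ff => rfl
  | var Y =>
    show Trn.tsubst (.var (Y+1)) (X+1) (synth θ) = synth (if Y = X then θ else .var Y)
    by_cases hYX : Y = X
    · simp [Trn.tsubst, hYX]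
    · have : ¬ (Y+1 = X+1) := by omega
      simp [Trn.tsubst, hYX, this]
      rfl
  | conj n f ih =>
    show Trn.tsubst (.fix 0 (.sel n fun i => synth (f i))) (X+1) (synth θ)
        = .fix 0 (.sel n fun i => synth (Frm.subst (f i) X θ))
    have h0 : ¬ ((0:ℕ) = X+1) := by omega
    simp only [Trn.tsubst, if_neg h0]
    congr 1
    congr 1
    funext i
    exact ih i
  | box G k ih =>
    simp only [synth, Frm.subst, Trn.tsubst]
    congr 1
    · funext γ
      cases γ with
      | none => rfl
      | some a =>
        show (if k a = Frm.ff then none else some a)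
            = (if Frm.subst (k a) X θ = Frm.ff then none else some a)
        by_cases hka : k a = Frm.ff
        · rw [if_pos hka, if_pos ((subst_eq_ff_iff hθ).2 hka)]
        · rw [if_neg hka, if_neg (fun hc => hka ((subst_eq_ff_iff hθ).1 hc))]
    · funext γ
      cases γ with
      | none => rfl
      | some a =>
        show Trn.tsubst (if k a = Frm.ff then Trn.var 0 else synth (k a)) (X+1) (synth θ)
            = (if Frm.subst (k a) X θ = Frm.ff then Trn.var 0 else synth (Frm.subst (k a) X θ))
        by_cases hka : k a = Frm.ff
        · rw [if_pos hka, if_pos ((subst_eq_ff_iff hθ).2 hka)]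
          simp [Trn.tsubst]
        · rw [if_neg hka, if_neg (fun hc => hka ((subst_eq_ff_iff hθ).1 hc))]
          exact ih a
  | max Y b ih =>
    show Trn.tsubst (.fix (Y+1) (synth b)) (X+1) (synth θ)
        = synth (if Y = X then Frm.max Y b else .max Y (Frm.subst b X θ))
    by_cases hYX : Y = X
    · have : (Y+1 = X+1) := by omega
      simp [Trn.tsubst, this, hYX]
      rfl
    · have : ¬ (Y+1 = X+1) := by omega
      simp only [Trn.tsubst, if_neg this, if_neg hYX, ih]
      rfl

/-- `e` has exactly the transitions of `synth χ`. -/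
def MEq (e : Trn Act) (χ : Frm Act) : Prop :=
  ∀ l (e' : Trn Act), TStep e l e' ↔ TStep (synth χ) l e'

lemma MEq.refl (χ : Frm Act) : MEq (synth χ) χ := fun _ _ => Iff.rfl

lemma maxred {X : ℕ} {b : Frm Act} (l : Option Act × Option Act) (e' : Trn Act) :
    TStep (synth (.max X b)) l e' ↔ TStep (synth (Frm.subst b X (.max X b))) l e' := by
  have hmax : (Frm.max X b) ≠ .ff := by intro h; cases h
  constructor
  · intro h
    cases h with
    | fix h =>
      rw [show Trn.fix (X+1) (synth b) = synth (.max X b) from rfl] at h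
      rwa [tsubst_synth b X hmax] at h
  · intro h
    exact TStep.fix (by rw [show Trn.fix (X+1) (synth b) = synth (.max X b) from rfl,
      tsubst_synth b X hmax]; exact h)

lemma conjinv {n : ℕ} {G : Fin n → Set Act} {k : Fin n → Act → Frm Act}
    (hk : ∀ j : Fin n, ∀ a ∈ G j, IsNF (k j a)) {l : Option Act × Option Act} {e₂ : Trn Act}
    (d : TStep (synth (.conj n fun j => .box (G j) (k j))) l e₂) :
    ∃ (j : Fin n) (b : Act), b ∈ G j ∧
      l = (some b, if k j b = .ff then none else some b) ∧
      e₂ = if k j b = .ff then synth (.conj n fun j => .box (G j) (k j)) else synth (k j b) := by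
  cases d with
  | fix h =>
    simp only [synth, Trn.tsubst] at h
    cases h with
    | sel j h =>
      simp only [synth, Trn.tsubst] at h
      cases h with
      | @prf _ out kc γ hγ =>
        obtain ⟨b, hb, rfl⟩ := hγ
        refine ⟨j, b, hb, rfl, ?_⟩
        show Trn.tsubst (if k j b = Frm.ff then Trn.var 0 else synth (k j b)) 0 _ = _
        by_cases hff : k j b = Frm.ff
        · rw [if_pos hff, if_pos hff]
          simp only [Trn.tsubst, synth]
          simp
        · rw [if_neg hff, if_neg hff]
          exact tsubst_synth_zero (hk j b hb) _

lemma hastep {n : ℕ} {G : Fin n → Set Act} (k : Fin n → Act → Frm Act)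
    (j : Fin n) {a : Act} (ha : a ∈ G j) :
    ∃ (μ : Option Act) (e' : Trn Act),
      TStep (synth (.conj n fun j => .box (G j) (k j))) (some a, μ) e' := by
  simp only [synth, Trn.tsubst]
  refine ⟨?_, ?_, ?_⟩
  case _ => exact (if k j a = Frm.ff then none else some a)
  case _ => exact (Trn.tsubst (if k j a = Frm.ff then Trn.var 0 else synth (k j a)) 0
      (Trn.fix 0 (Trn.sel n fun i => Trn.prf {γ | ∃ a' ∈ G i, γ = some a'}
        (fun γ => match γ with
          | some a => if k i a = Frm.ff then none else some a
          | none => none)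
        (fun γ => match γ with
          | some a => if k i a = Frm.ff then Trn.var 0 else synth (k i a)
          | none => .id))))
  apply TStep.fix
  simp only [Trn.tsubst]
  exact TStep.sel j (TStep.prf (γ := some a) ⟨a, ha, rfl⟩)

def Shape (χ : Frm Act) : Prop :=
  (∃ X b, χ = .max X b) ∨
  (∃ (n : ℕ) (G : Fin n → Set Act) (k : Fin n → Act → Frm Act),
      χ = .conj n fun j => .box (G j) (k j))

lemma shape_of {χ : Frm Act} (hcl : χ.Closed) (hnf : IsNF χ) (hne : χ ≠ .ff) :
    χ = .tt ∨ Shape χ := by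
  cases hnf with
  | tt => exact Or.inl rfl
  | ff => exact absurd rfl hne
  | var Y =>
    exfalso
    have : Y ∈ fv (Frm.var Y (Act := Act)) := rfl
    rw [hcl] at this
    exact this
  | conj n G k hdisj hk => exact Or.inr (Or.inr ⟨n, G, k, rfl⟩)
  | max Y b hfree hb => exact Or.inr (Or.inl ⟨Y, b, rfl⟩)

lemma good_unfold {X : ℕ} {b : Frm Act} (hcl : (Frm.max X b).Closed)
    (hnf : IsNF (.max X b)) :
    (Frm.subst b X (.max X b)).Closed ∧ IsNF (Frm.subst b X (.max X b)) ∧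
      Frm.subst b X (.max X b) ≠ .ff ∧ Shape (Frm.subst b X (.max X b)) := by
  obtain ⟨hfree, hb⟩ := isNF_max_inv hnf
  have hmaxff : (Frm.max X b) ≠ .ff := by intro h; cases h
  have hbff : b ≠ .ff := by
    intro h; subst h; simp [fv] at hfree
  have hclb : fv b \ {X} = ∅ := hcl
  refine ⟨?_, isNF_subst hb hnf, ?_, ?_⟩
  · show fv (Frm.subst b X (.max X b)) = ∅
    have h1 := fv_subst_subset b X (.max X b)
    rw [show fv (Frm.max X b) = fv b \ {X} from rfl, hclb] at h1
    simpa using h1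
  · rw [Ne, subst_eq_ff_iff hmaxff]
    exact hbff
  · cases hb with
    | tt => exact absurd hfree (by simp [fv])
    | ff => exact absurd hfree (by simp [fv])
    | var Y =>
      have hXY : X = Y := by simpa [fv] using hfree
      rw [show Frm.subst (Frm.var Y) X (.max X (.var Y))
            = if Y = X then Frm.max X (Frm.var Y) else .var Y from rfl,
        if_pos hXY.symm]
      exact Or.inl ⟨X, _, rfl⟩
    | conj n G k hdisj hk =>
      refine Or.inr ⟨n, G, fun j a => Frm.subst (k j a) X (.max X (.conj n fun i => .box (G i) (k i))), ?_⟩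
      rfl
    | max Y c hfree2 hc =>
      have hYX : Y ≠ X := by
        intro h; subst h
        simp [fv] at hfree
      show Shape (if Y = X then _ else Frm.max Y (Frm.subst c X _))
      rw [if_neg hYX]
      exact Or.inl ⟨Y, _, rfl⟩

lemma synth_max_eq (X : ℕ) (b : Frm Act) : synth (.max X b) = .fix (X+1) (synth b) := by
  simp only [synth]

lemma synth_conj_eq (n : ℕ) (f : Fin n → Frm Act) :
    synth (.conj n f) = .fix 0 (.sel n fun i => synth (f i)) := by
  simp only [synth]

lemma stepinv {e : Trn Act} {l : Option Act × Option Act} {e₂ : Trn Act}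
    (d : TStep e l e₂) :
    ∀ χ : Frm Act, e = synth χ → χ.Closed → IsNF χ → Shape χ →
    ∃ b : Act, l.1 = some b ∧ (l.2 = none → MEq e₂ χ) := by
  induction d with
  | id a =>
    intro χ he hcl hnf hs
    rcases hs with ⟨X, b, rfl⟩ | ⟨n, G, k, rfl⟩ <;>
      [rw [synth_max_eq] at he; rw [synth_conj_eq] at he] <;>
      cases he
  | prf hγ =>
    intro χ he hcl hnf hs
    rcases hs with ⟨X, b, rfl⟩ | ⟨n, G, k, rfl⟩ <;>
      [rw [synth_max_eq] at he; rw [synth_conj_eq] at he] <;>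
      cases he
  | sel i h ih =>
    intro χ he hcl hnf hs
    rcases hs with ⟨X, b, rfl⟩ | ⟨n, G, k, rfl⟩ <;>
      [rw [synth_max_eq] at he; rw [synth_conj_eq] at he] <;>
      cases he
  | @fix x e0 l' e' h ih =>
    intro χ he hcl hnf hs
    rcases hs with ⟨X, b, rfl⟩ | ⟨n, G, k, rfl⟩
    · rw [synth_max_eq] at he
      injection he with hx he0
      subst hx
      subst he0
      obtain ⟨hcl', hnf', hne', hs'⟩ := good_unfold hcl hnf
      have hmaxff : (Frm.max X b) ≠ .ff := fun h => by cases h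
      have hred : Trn.tsubst (synth b) (X+1) (.fix (X+1) (synth b))
          = synth (Frm.subst b X (.max X b)) := by
        rw [← synth_max_eq]
        exact tsubst_synth b X hmaxff
      obtain ⟨bb, h1, h2⟩ := ih _ hred hcl' hnf' hs'
      refine ⟨bb, h1, fun hn l'' e'' => ?_⟩
      exact (h2 hn l'' e'').trans (maxred l'' e'').symm
    · have hd : TStep (synth (.conj n fun j => .box (G j) (k j))) l' e' := by
        rw [← he]; exact TStep.fix h
      obtain ⟨G', k', heq, hdisj, hk'⟩ := isNF_conj_inv hnf
      have hGK : ∀ j : Fin n, G j = G' j ∧ k j = k' j := fun j =>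
        Frm.box.inj (congrFun heq j)
      have hk2 : ∀ j, ∀ a ∈ G j, IsNF (k j a) := fun j a ha => by
        rw [(hGK j).2]
        exact hk' j a (by rw [← (hGK j).1]; exact ha)
      obtain ⟨j, bb, hbb, hl, he2⟩ := conjinv hk2 hd
      refine ⟨bb, by rw [hl], fun hn => ?_⟩
      rw [hl] at hn
      by_cases hff : k j bb = Frm.ff
      · rw [if_pos hff] at he2
        rw [he2]
        exact MEq.refl _
      · exfalso
        simp only [if_neg hff] at hn
        cases hn

lemma synth_tt_eq : synth (Frm.tt : Frm Act) = .id := by simp only [synth]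

variable {L : LTS Act}

lemma taupres {χ : Frm Act} (hcl : χ.Closed) (hnf : IsNF χ) (hne : χ ≠ .ff)
    {s₁ s₂ : Trn Act × L.S} (hm : MEq s₁.1 χ) (h : IStep L s₁ none s₂) : MEq s₂.1 χ := by
  rcases shape_of hcl hnf hne with rfl | hs
  · cases h with
    | trn hp ht =>
      exfalso
      have hd := (hm _ _).1 ht
      rw [synth_tt_eq] at hd
      cases hd
    | asy hp => exact hm
    | ins ht =>
      exfalso
      have hd := (hm _ _).1 ht
      rw [synth_tt_eq] at hd
      cases hd
  · cases h with
    | trn hp ht =>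
      have hd := (hm _ _).1 ht
      obtain ⟨b, h1, h2⟩ := stepinv hd χ rfl hcl hnf hs
      exact h2 rfl
    | asy hp => exact hm
    | ins ht =>
      exfalso
      have hd := (hm _ _).1 ht
      obtain ⟨b, h1, -⟩ := stepinv hd χ rfl hcl hnf hs
      simp at h1

lemma taustar_pres {χ : Frm Act} (hcl : χ.Closed) (hnf : IsNF χ) (hne : χ ≠ .ff)
    {s s' : Trn Act × L.S} (hts : TauStar (instLTS L) s s') (hm : MEq s.1 χ) :
    MEq s'.1 χ := by
  induction hts with
  | refl => exact hm
  | tail h1 h2 ih => exact taupres hcl hnf hne ih h2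

/-- The concrete satisfaction relation used for the soundness proof. -/
def Rrel (L : LTS Act) : (Trn Act × L.S) → Frm Act → Prop := fun s ψ =>
  (∃ χ : Frm Act, (χ.Closed ∧ χ.IsNF ∧ χ ≠ .ff) ∧ GEq ψ χ ∧ MEq s.1 χ) ∨
  (∃ (n : ℕ) (G : Fin n → Set Act) (k : Fin n → Act → Frm Act) (i : Fin n),
    (∀ j₁ j₂ : Fin n, j₁ ≠ j₂ → ∀ a ∈ G j₁, a ∉ G j₂) ∧
    (∀ j : Fin n, ∀ a ∈ G j, IsNF (k j a) ∧ (k j a).Closed) ∧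
    GEq ψ (.box (G i) (k i)) ∧ MEq s.1 (.conj n fun j => .box (G j) (k j)))

lemma satrel (L : LTS Act) : IsSatRel (instLTS L) (Rrel L) := by
  refine ⟨?_, ?_, ?_, ?_⟩
  · -- ff
    rintro s (⟨χ, ⟨hcl, hnf, hne⟩, hg, hm⟩ | ⟨n, G, k, i, hdisj, hk, hg, hm⟩)
    · cases hg
      exact hne rfl
    · cases hg
  · -- conj
    rintro s n f (⟨χ, ⟨hcl, hnf, hne⟩, hg, hm⟩ | ⟨m, G, k, j, hdisj, hk, hg, hm⟩) i
    · cases hg with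
      | conj hfg =>
        rename_i g
        obtain ⟨G, k, heq, hdisj, hk'⟩ := isNF_conj_inv hnf
        subst heq
        have hclk : ∀ j, ∀ a ∈ G j, (k j a).Closed := by
          intro j a ha
          apply Set.eq_empty_iff_forall_notMem.2
          intro z hz
          have hmem : z ∈ fv (Frm.conj n fun j => Frm.box (G j) (k j)) := by
            show z ∈ ⋃ i, fv (Frm.box (G i) (k i))
            refine Set.mem_iUnion.2 ⟨j, ?_⟩
            show z ∈ ⋃ b ∈ G j, fv (k j b)
            exact Set.mem_iUnion.2 ⟨a, Set.mem_iUnion.2 ⟨ha, hz⟩⟩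
          rw [hcl] at hmem
          exact hmem
        exact Or.inr ⟨n, G, k, i, hdisj,
          (fun j a ha => ⟨hk' j a ha, hclk j a ha⟩), hfg i, hm⟩
    · cases hg
  · -- box
    rintro s G k (⟨χ, ⟨hcl, hnf, hne⟩, hg, hm⟩ | ⟨m, Gs, ks, i, hdisj, hks, hg, hm⟩) a ha q hw
    · cases hg with
      | box hkk => exact ((isNF_box_false hnf)).elim
    · cases hg with
      | box hkk =>
        -- now the guard of the box equals Gs i, call continuations: GEq (k b) (ks i b) for b ∈ Gs i
        have hnfc : IsNF (.conj m fun j => .box (Gs j) (ks j)) :=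
          IsNF.conj m Gs ks hdisj (fun j a ha => (hks j a ha).1)
        have hclc : (Frm.conj m fun j => .box (Gs j) (ks j)).Closed := by
          apply Set.eq_empty_iff_forall_notMem.2
          intro z hz
          have hz' : z ∈ ⋃ i, fv (Frm.box (Gs i) (ks i)) := hz
          obtain ⟨j', hj'⟩ := Set.mem_iUnion.1 hz'
          have hj'' : z ∈ ⋃ b ∈ Gs j', fv (ks j' b) := hj'
          obtain ⟨b, hb⟩ := Set.mem_iUnion.1 hj''
          obtain ⟨hbG, hbz⟩ := Set.mem_iUnion.1 hb
          rw [(hks j' b hbG).2] at hbz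
          exact hbz
        have hnec : (Frm.conj m fun j => .box (Gs j) (ks j)) ≠ .ff := fun h => by cases h
        obtain ⟨s₁, s₂, hts1, hstep, hts2⟩ := hw
        have hm1 : MEq s₁.1 (.conj m fun j => .box (Gs j) (ks j)) :=
          taustar_pres hclc hnfc hnec hts1 hm
        have hstep' : IStep L s₁ (some a) s₂ := hstep
        cases hstep' with
        | @trn e e' p p' b μ hp ht =>
          have hd := (hm1 _ _).1 ht
          obtain ⟨j', bb, hbb, hl, he2⟩ := conjinv (fun j a ha => (hks j a ha).1) hd
          by_cases hff : ks j' bb = Frm.ff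
          · rw [if_pos hff] at hl
            simp at hl
          · rw [if_neg hff] at hl
            obtain ⟨hb1, hb2⟩ := Prod.mk.inj hl
            have hbeq : b = bb := Option.some.inj hb1
            have haeq : a = bb := Option.some.inj hb2
            subst hbeq
            have haG : a ∈ Gs j' := haeq ▸ hbb
            have hji : j' = i := by
              by_contra hne'
              exact hdisj j' i hne' a haG ha
            subst hji
            rw [if_neg hff] at he2
            have hm2 : MEq e' (ks j' a) := by
              rw [he2, ← haeq]
              exact MEq.refl _
            have hmq : MEq q.1 (ks j' a) :=
              taustar_pres (hks j' a haG).2 (hks j' a haG).1 (haeq ▸ hff) hts2 hm2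
            exact Or.inl ⟨ks j' a, ⟨(hks j' a haG).2, (hks j' a haG).1, haeq ▸ hff⟩,
              hkk a ha, hmq⟩
        | ins ht =>
          have hd := (hm1 _ _).1 ht
          obtain ⟨j', bb, hbb, hl, he2⟩ := conjinv (fun j a ha => (hks j a ha).1) hd
          simp at hl
        | ter hp hno hnoins =>
          obtain ⟨μ, e', hstep2⟩ := hastep ks i ha
          exact ((hno μ e') ((hm1 _ _).2 hstep2)).elim
  · -- max
    rintro s X ψb (⟨χ, ⟨hcl, hnf, hne⟩, hg, hm⟩ | ⟨m, Gs, ks, i, hdisj, hks, hg, hm⟩)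
    · cases hg with
      | max hb =>
        rename_i b
        obtain ⟨hcl', hnf', hne', hs'⟩ := good_unfold hcl hnf
        refine Or.inl ⟨Frm.subst b X (.max X b), ⟨hcl', hnf', hne'⟩,
          geq_subst hb (GEq.max hb), fun l e' => (hm l e').trans (maxred l e')⟩
    · cases hg

lemma closed_fv_empty {χ : Frm Act} (h : χ.Closed) : fv χ = ∅ := h

lemma gen {L' : LTS Act} {R : L'.S → Frm Act → Prop} (hR : IsSatRel L' R) :
    ∀ (φ : Frm Act) (σ : ℕ → Frm Act) (ρ : ℕ → Set L'.S),
      (∀ Y, σ Y = .var Y ∨ allfv (σ Y) = ∅) →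
      (∀ Y ∈ φ.fv, allfv (σ Y) = ∅) →
      (∀ Y ∈ φ.fv, ρ Y = {r | R r (σ Y)}) →
      ∀ q, R q (applySub φ σ) → q ∈ sem L' φ ρ := by
  intro φ
  induction φ with
  | tt =>
    intro σ ρ h1 h2 h3 q hq
    rw [show sem L' .tt ρ = Set.univ from by simp only [sem]]
    trivial
  | ff =>
    intro σ ρ h1 h2 h3 q hq
    rw [show applySub (Frm.ff) σ = Frm.ff from by simp only [applySub]] at hq
    exact absurd hq (hR.1 q)
  | var Y =>
    intro σ ρ h1 h2 h3 q hq
    rw [show applySub (Frm.var Y) σ = σ Y from by simp only [applySub]] at hq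
    have hmem : Y ∈ fv (Frm.var Y (Act := Act)) := rfl
    rw [show sem L' (.var Y) ρ = ρ Y from by simp only [sem], h3 Y hmem]
    exact hq
  | conj n f ih =>
    intro σ ρ h1 h2 h3 q hq
    rw [show applySub (Frm.conj n f) σ = .conj n (fun i => applySub (f i) σ)
        from by simp only [applySub]] at hq
    rw [show sem L' (.conj n f) ρ = ⋂ i, sem L' (f i) ρ from by simp only [sem]]
    refine Set.mem_iInter.2 fun i => ?_
    have hqi := hR.2.1 q n _ hq i
    refine ih i σ ρ h1 (fun Y hY => h2 Y ?_) (fun Y hY => h3 Y ?_) q hqi <;>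
      · show Y ∈ ⋃ j, fv (f j)
        exact Set.mem_iUnion.2 ⟨i, hY⟩
  | box G k ih =>
    intro σ ρ h1 h2 h3 q hq
    rw [show applySub (Frm.box G k) σ
        = .box G (fun a => if a ∈ G then applySub (k a) σ else .tt)
        from by simp only [applySub]] at hq
    rw [show sem L' (.box G k) ρ
        = {p | ∀ a ∈ G, ∀ q', WStep L' p a q' → q' ∈ sem L' (k a) ρ}
        from by simp only [sem]]
    intro a ha q' hw
    have hq' := hR.2.2.1 q G _ hq a ha q' hw
    rw [if_pos ha] at hq'
    refine ih a σ ρ h1 (fun Y hY => h2 Y ?_) (fun Y hY => h3 Y ?_) q' hq' <;>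
      · show Y ∈ ⋃ b ∈ G, fv (k b)
        exact Set.mem_iUnion.2 ⟨a, Set.mem_iUnion.2 ⟨ha, hY⟩⟩
  | max X ψ ih =>
    intro σ ρ h1 h2 h3 q hq
    have hθ : applySub (.max X ψ) σ
        = .max X (applySub ψ (Function.update σ X (.var X))) := by simp only [applySub]
    have hallθ : allfv (applySub (.max X ψ) σ) = ∅ := by
      apply Set.eq_empty_iff_forall_notMem.2
      intro z hz
      have hz2 := allfv_applySub (.max X ψ) σ hz
      simp only [Set.mem_iUnion] at hz2
      obtain ⟨Y, hY, hzY⟩ := hz2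
      rw [h2 Y hY] at hzY
      exact hzY
    rw [show sem L' (.max X ψ) ρ
        = ⋃₀ {T | T ⊆ sem L' ψ (Function.update ρ X T)} from by simp only [sem]]
    set θ := applySub (.max X ψ) σ with hθdef
    set S : Set L'.S := {r | R r θ} with hSdef
    refine ⟨S, ?_, hq⟩
    intro r hr
    have hr1 : R r (.max X (applySub ψ (Function.update σ X (.var X)))) := by
      rw [← hθ]; exact hr
    have hr2 := hR.2.2.2 r X _ hr1
    rw [← hθ] at hr2
    have hsc : Frm.subst (applySub ψ (Function.update σ X (.var X))) X θ
        = applySub ψ (Function.update σ X θ) := by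
      rw [subcomp ψ (Function.update σ X (.var X)) X θ (Function.update_self ..)
        (fun Y hYX => by
          rw [Function.update_of_ne hYX]
          rcases h1 Y with h | h
          · rw [h]
            simp only [allfv, Set.mem_singleton_iff]
            exact fun hc => hYX hc.symm
          · rw [h]
            exact Set.notMem_empty X)]
      rw [Function.update_idem]
    rw [hsc] at hr2
    refine ih (Function.update σ X θ) (Function.update ρ X S)
      (fun Y => ?_) (fun Y hY => ?_) (fun Y hY => ?_) r hr2
    · by_cases hYX : Y = X
      · subst hYX
        rw [Function.update_self]
        exact Or.inr hallθ
      · rw [Function.update_of_ne hYX]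
        exact h1 Y
    · by_cases hYX : Y = X
      · subst hYX
        rw [Function.update_self]
        exact hallθ
      · rw [Function.update_of_ne hYX]
        refine h2 Y ?_
        show Y ∈ fv ψ \ {X}
        exact ⟨hY, by simpa using hYX⟩
    · by_cases hYX : Y = X
      · subst hYX
        rw [Function.update_self, Function.update_self]
      · rw [Function.update_of_ne hYX, Function.update_of_ne hYX]
        refine h3 Y ?_
        show Y ∈ fv ψ \ {X}
        exact ⟨hY, by simpa using hYX⟩

end Soundness

/-- Enforcement Soundness: for every system p and closed
φ ∈ SHMLnf, if φ ∈ Sat then ⟦φ⟧e[p] ∈ ⟦φ⟧. -/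
theorem enforcement_soundness (Act : Type) (L : LTS Act) (φ : Frm Act)
    (hclosed : φ.Closed) (hnf : φ.IsNF) (p : L.S) (hsat : SatIn L φ) :
    (synth φ, p) ∈ Sem (instLTS L) φ := by
  by_cases hff : φ = .ff
  · exfalso
    rcases hsat with ⟨q, hq⟩
    subst hff
    simp [Sem, sem] at hq
  · have hR := satrel L
    have := gen hR φ (fun Y => .var Y) (fun _ => ∅)
      (fun Y => Or.inl rfl)
      (by rw [hclosed]; intro Y h; exact absurd h (Set.notMem_empty Y))
      (by rw [hclosed]; intro Y h; exact absurd h (Set.notMem_empty Y))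
      (synth φ, p)
      (Or.inl ⟨φ, ⟨hclosed, hnf, hff⟩, geq_applySub φ _ (fun _ => rfl), MEq.refl φ⟩)
    exact this

end Enf
end

section
/- First violating-trace-semantics condition for SHML: for every closed formula φ ∈ SHML, every system p and every trace t ∈ Act*, if p ⊨v^t φ then p does not satisfy φ (p ∉ ⟦φ⟧) and p can weakly perform the trace t (there exists p' with p =t=> p'). -/
set_option autoImplicit false

namespace Enf

open scoped Classical

variable {Act : Type}

lemma sem_congr (L : LTS Act) :
    ∀ (φ : Frm Act) (ρ ρ' : ℕ → Set L.S),
      (∀ X ∈ Frm.fv φ, ρ X = ρ' X) → sem L φ ρ = sem L φ ρ' := by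
  intro φ
  induction φ with
  | tt => intros; rfl
  | ff => intros; rfl
  | var Y =>
      intro ρ ρ' h
      exact h Y (by simp [Frm.fv])
  | conj n f ih =>
      intro ρ ρ' h
      simp only [sem]
      exact Set.iInter_congr fun i =>
        ih i ρ ρ' (fun X hX => h X (by simp [Frm.fv]; exact ⟨i, hX⟩))
  | box G k ih =>
      intro ρ ρ' h
      simp only [sem]
      ext q
      constructor <;> intro hq a ha r hr
      · rw [← ih a ρ ρ' (fun X hX => h X (by simp [Frm.fv]; exact ⟨a, ha, hX⟩))]
        exact hq a ha r hr
      · rw [ih a ρ ρ' (fun X hX => h X (by simp [Frm.fv]; exact ⟨a, ha, hX⟩))]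
        exact hq a ha r hr
  | max X φ ih =>
      intro ρ ρ' h
      simp only [sem]
      have hset : {S : Set L.S | S ⊆ sem L φ (Function.update ρ X S)}
          = {S : Set L.S | S ⊆ sem L φ (Function.update ρ' X S)} := by
        ext S
        simp only [Set.mem_setOf_eq]
        rw [ih (Function.update ρ X S) (Function.update ρ' X S) (fun Y hY => by
          rcases eq_or_ne Y X with rfl | hne
          · simp
          · simp only [Function.update_of_ne hne]
            exact h Y (by simp [Frm.fv]; exact ⟨hY, hne⟩))]
      rw [hset]

lemma sem_mono (L : LTS Act) :
    ∀ (φ : Frm Act) (ρ ρ' : ℕ → Set L.S),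
      (∀ X, ρ X ⊆ ρ' X) → sem L φ ρ ⊆ sem L φ ρ' := by
  intro φ
  induction φ with
  | tt => intros; exact subset_rfl
  | ff => intros; exact subset_rfl
  | var Y => intro ρ ρ' h; exact h Y
  | conj n f ih =>
      intro ρ ρ' h p hp
      simp only [sem, Set.mem_iInter] at hp ⊢
      exact fun i => ih i ρ ρ' h (hp i)
  | box G k ih =>
      intro ρ ρ' h p hp a ha r hr
      exact ih a ρ ρ' h (hp a ha r hr)
  | max X φ ih =>
      intro ρ ρ' h p hp
      obtain ⟨S, hS, hpS⟩ := hp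
      refine ⟨S, ?_, hpS⟩
      refine hS.trans (ih _ _ ?_)
      intro Y
      rcases eq_or_ne Y X with rfl | hne
      · simp
      · simp [Function.update_of_ne hne]; exact h Y

lemma fv_subst (φ : Frm Act) (X : ℕ) (ψ : Frm Act) (hψ : Frm.fv ψ = ∅) :
    Frm.fv (Frm.subst φ X ψ) ⊆ Frm.fv φ \ {X} := by
  induction φ with
  | tt => simp [Frm.subst, Frm.fv]
  | ff => simp [Frm.subst, Frm.fv]
  | var Y =>
      rcases eq_or_ne Y X with rfl | hne
      · simp [Frm.subst, hψ]
      · simp only [Frm.subst, if_neg hne, Frm.fv]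
        intro Z hZ
        simp only [Set.mem_singleton_iff] at hZ
        subst hZ
        simp [hne]
  | conj n f ih =>
      simp only [Frm.subst, Frm.fv]
      intro Z hZ
      simp only [Set.mem_iUnion] at hZ
      obtain ⟨i, hi⟩ := hZ
      have := ih i hi
      simp only [Set.mem_diff, Set.mem_singleton_iff] at this ⊢
      exact ⟨Set.mem_iUnion.2 ⟨i, this.1⟩, this.2⟩
  | box G k ih =>
      simp only [Frm.subst, Frm.fv]
      intro Z hZ
      simp only [Set.mem_iUnion] at hZ
      obtain ⟨a, ha, hi⟩ := hZ
      have := ih a hi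
      simp only [Set.mem_diff, Set.mem_singleton_iff] at this ⊢
      refine ⟨Set.mem_iUnion.2 ⟨a, ?_⟩, this.2⟩
      exact Set.mem_iUnion.2 ⟨ha, this.1⟩
  | max Y φ ih =>
      rcases eq_or_ne Y X with rfl | hne
      · simp only [Frm.subst, if_pos rfl, Frm.fv]
        intro Z hZ
        simp only [Set.mem_diff, Set.mem_singleton_iff] at hZ ⊢
        exact ⟨⟨hZ.1, hZ.2⟩, hZ.2⟩
      · simp only [Frm.subst, if_neg hne, Frm.fv]
        intro Z hZ
        simp only [Set.mem_diff, Set.mem_singleton_iff] at hZ ⊢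
        have := ih hZ.1
        simp only [Set.mem_diff, Set.mem_singleton_iff] at this
        exact ⟨⟨this.1, hZ.2⟩, this.2⟩

lemma sem_subst (L : LTS Act) (ψ : Frm Act) (hψ : Frm.fv ψ = ∅) :
    ∀ (φ : Frm Act) (X : ℕ) (ρ : ℕ → Set L.S),
      sem L (Frm.subst φ X ψ) ρ
        = sem L φ (Function.update ρ X (sem L ψ fun _ => ∅)) := by
  intro φ
  induction φ with
  | tt => intros; rfl
  | ff => intros; rfl
  | var Y =>
      intro X ρ
      rcases eq_or_ne Y X with rfl | hne
      · simp only [Frm.subst, if_pos rfl, ↓reduceIte, sem, Function.update_self]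
        exact sem_congr L ψ ρ (fun _ => ∅) (by simp [hψ])
      · simp [Frm.subst, hne, sem, Function.update_of_ne hne]
  | conj n f ih =>
      intro X ρ
      simp only [Frm.subst, sem]
      exact Set.iInter_congr fun i => ih i X ρ
  | box G k ih =>
      intro X ρ
      simp only [Frm.subst, sem]
      ext q
      simp only [Set.mem_setOf_eq]
      constructor <;> intro hq a ha r hr
      · rw [← ih a X ρ]; exact hq a ha r hr
      · rw [ih a X ρ]; exact hq a ha r hr
  | max Y φ ih =>
      intro X ρ
      rcases eq_or_ne Y X with rfl | hne
      · simp only [Frm.subst, if_pos rfl, ↓reduceIte, sem]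
        have hset : {S : Set L.S | S ⊆ sem L φ (Function.update ρ Y S)}
            = {S : Set L.S | S ⊆ sem L φ (Function.update
                (Function.update ρ Y (sem L ψ fun _ => ∅)) Y S)} := by
          ext S
          have hupd : ∀ (T S' : Set L.S),
              Function.update (Function.update ρ Y T) Y S'
                = Function.update ρ Y S' := by
            intro T S'
            funext Z
            rcases eq_or_ne Z Y with rfl | h
            · simp
            · simp [Function.update_of_ne h]
          simp only [hupd]
        rw [hset]
      · simp only [Frm.subst, if_neg hne, sem]
        have hset : {S : Set L.S | S ⊆ sem L (Frm.subst φ X ψ) (Function.update ρ Y S)}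
            = {S : Set L.S | S ⊆ sem L φ (Function.update
                (Function.update ρ X (sem L ψ fun _ => ∅)) Y S)} := by
          ext S
          simp only [Set.mem_setOf_eq]
          rw [ih X (Function.update ρ Y S), Function.update_comm hne]
        rw [hset]

lemma sem_max_unfold (L : LTS Act) (X : ℕ) (φ : Frm Act) (ρ : ℕ → Set L.S) :
    sem L (.max X φ) ρ ⊆ sem L φ (Function.update ρ X (sem L (.max X φ) ρ)) := by
  intro p hp
  obtain ⟨S, hS, hpS⟩ := hp
  refine sem_mono L φ (Function.update ρ X S) _ ?_ (hS hpS)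
  intro Y
  rcases eq_or_ne Y X with rfl | hne
  · simp only [Function.update_self]
    exact fun x hx => ⟨S, hS, hx⟩
  · simp [Function.update_of_ne hne]

/-- first violating-trace-semantics condition: if p ⊨v^t φ then
p ∉ ⟦φ⟧ and p can weakly perform t. -/
theorem violating_trace_cond1 (Act : Type) (L : LTS Act) (φ : Frm Act)
    (hclosed : φ.Closed) (p : L.S) (t : List Act) (hviol : Viol L p t φ) :
    p ∉ Sem L φ ∧ ∃ p' : L.S, WTrace L p t p' := by
  induction hviol with
  | ff q =>
      exact ⟨fun h => h, ⟨q, WTrace.nil Relation.ReflTransGen.refl⟩⟩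
  | @conj q t n f j hv ih =>
      have hcl : (f j).Closed := by
        have : Frm.fv (f j) ⊆ Frm.fv (Frm.conj n f) := by
          simp only [Frm.fv]
          exact Set.subset_iUnion (fun i => Frm.fv (f i)) j
        unfold Frm.Closed at hclosed ⊢
        rw [hclosed] at this
        exact Set.eq_empty_iff_forall_notMem.2 fun x hx => this hx
      obtain ⟨h1, h2⟩ := ih hcl
      refine ⟨fun h => h1 ?_, h2⟩
      simp only [Sem, sem, Set.mem_iInter] at h
      exact h j
  | @box q q' t a G k ha hstep hv ih =>
      have hcl : (k a).Closed := by
        have : Frm.fv (k a) ⊆ Frm.fv (Frm.box G k) := by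
          simp only [Frm.fv]
          intro x hx
          exact Set.mem_iUnion.2 ⟨a, Set.mem_iUnion.2 ⟨ha, hx⟩⟩
        unfold Frm.Closed at hclosed ⊢
        rw [hclosed] at this
        exact Set.eq_empty_iff_forall_notMem.2 fun x hx => this hx
      obtain ⟨h1, h2⟩ := ih hcl
      obtain ⟨p', hp'⟩ := h2
      refine ⟨fun h => h1 (h a ha q' hstep), ⟨p', WTrace.cons hstep hp'⟩⟩
  | @max q t X ψ hv ih =>
      have hclψ : Frm.fv (Frm.max X ψ) = ∅ := hclosed
      have hcl : (Frm.subst ψ X (Frm.max X ψ)).Closed := by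
        have h2 := fv_subst ψ X (Frm.max X ψ) hclψ
        have h4 : Frm.fv ψ \ {X} = (∅ : Set ℕ) := hclψ
        rw [h4] at h2
        exact Set.subset_empty_iff.1 h2
      obtain ⟨h1, h2⟩ := ih hcl
      refine ⟨fun h => h1 ?_, h2⟩
      have hun := sem_max_unfold L X ψ (fun _ => ∅) h
      rw [Sem, sem_subst L (Frm.max X ψ) hclψ ψ X]
      exact hun

end Enf
end

section
/- Second violating-trace-semantics condition for SHML: for every closed formula φ ∈ SHML and every system p, if p does not satisfy φ (p ∉ ⟦φ⟧) then there exists a trace t ∈ Act* such that p ⊨v^t φ, i.e., every violating system exhibits a violating trace. -/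
set_option autoImplicit false

namespace Enf

open scoped Classical

variable {Act : Type}

/-! ### Auxiliary development for the violating-trace theorem -/

/-- Structural similarity of formulas, requiring agreement of box
continuations only on the guard. -/
inductive Sim : Frm Act → Frm Act → Prop
  | tt : Sim .tt .tt
  | ff : Sim .ff .ff
  | var (X : ℕ) : Sim (.var X) (.var X)
  | conj {n : ℕ} {f f' : Fin n → Frm Act} (h : ∀ i, Sim (f i) (f' i)) :
      Sim (.conj n f) (.conj n f')
  | box {G : Set Act} {k k' : Act → Frm Act} (h : ∀ a ∈ G, Sim (k a) (k' a)) :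
      Sim (.box G k) (.box G k')
  | max {X : ℕ} {φ φ' : Frm Act} (h : Sim φ φ') : Sim (.max X φ) (.max X φ')

lemma Sim.refl : ∀ φ : Frm Act, Sim φ φ
  | .tt => .tt
  | .ff => .ff
  | .var X => .var X
  | .conj n f => .conj fun i => Sim.refl (f i)
  | .box G k => .box fun a _ => Sim.refl (k a)
  | .max X φ => .max (Sim.refl φ)

lemma Sim.symm {φ φ' : Frm Act} (h : Sim φ φ') : Sim φ' φ := by
  induction h with
  | tt => exact .tt
  | ff => exact .ff
  | var X => exact .var X
  | conj h ih => exact .conj ih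
  | box h ih => exact .box ih
  | max h ih => exact .max ih

lemma Sim.subst {φ φ' ψ ψ' : Frm Act} {X : ℕ} (h : Sim φ φ') (hψ : Sim ψ ψ') :
    Sim (Frm.subst φ X ψ) (Frm.subst φ' X ψ') := by
  induction h with
  | tt => exact .tt
  | ff => exact .ff
  | var Y =>
    simp only [Frm.subst]
    split
    · exact hψ
    · exact .var Y
  | conj h ih => exact .conj ih
  | box h ih => exact .box ih
  | @max Y θ θ' h ih =>
    simp only [Frm.subst]
    split
    · exact .max h
    · exact .max ih

lemma viol_sim {L : LTS Act} {p : L.S} {t : List Act} {φ φ' : Frm Act}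
    (hv : Viol L p t φ) (hs : Sim φ φ') : Viol L p t φ' := by
  induction hv generalizing φ' with
  | ff p => cases hs; exact .ff p
  | conj j hv ih =>
    cases hs with
    | conj h => exact .conj j (ih (h j))
  | box ha hw hv ih =>
    cases hs with
    | box h => exact .box ha hw (ih (h _ ha))
  | @max q t X θ hv ih =>
    cases hs with
    | max h => exact .max (ih (Sim.subst h (Sim.max h)))

lemma subst_not_free_sim {χ : Frm Act} {X : ℕ} :
    ∀ {φ : Frm Act}, X ∉ φ.fv → Sim (Frm.subst φ X χ) φ := by
  intro φ
  induction φ with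
  | tt => intro _; exact .tt
  | ff => intro _; exact .ff
  | var Y =>
    intro h
    simp only [Frm.fv, Set.mem_singleton_iff] at h
    have hne : ¬ Y = X := fun hh => h hh.symm
    simp only [Frm.subst, if_neg hne]
    exact .var Y
  | conj n f ih =>
    intro h
    simp only [Frm.fv, Set.mem_iUnion, not_exists] at h
    exact .conj fun i => ih i (h i)
  | box G k ih =>
    intro h
    simp only [Frm.fv, Set.mem_iUnion, not_exists] at h
    exact .box fun a ha => ih a (h a ha)
  | max Y ψ ih =>
    intro h
    simp only [Frm.fv, Set.mem_diff, Set.mem_singleton_iff, not_and, not_not] at h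
    simp only [Frm.subst]
    split
    · exact Sim.refl _
    · rename_i hne
      refine .max (ih fun hX => hne ?_)
      exact (h hX).symm

/-- Semantics is invariant under similarity. -/
lemma sem_sim (L : LTS Act) {φ φ' : Frm Act} (h : Sim φ φ') (ρ : ℕ → Set L.S) :
    sem L φ ρ = sem L φ' ρ := by
  induction h generalizing ρ with
  | tt => rfl
  | ff => rfl
  | var X => rfl
  | conj h ih =>
    simp only [sem]
    exact Set.iInter_congr fun i => ih i ρ
  | box h ih =>
    simp only [sem]
    ext p
    constructor <;> intro hp a ha q hq
    · exact (ih a ha ρ) ▸ hp a ha q hq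
    · exact (ih a ha ρ).symm ▸ hp a ha q hq
  | @max X θ θ' h ih =>
    simp only [sem, ih]

/-- Simultaneous substitution of formulas for all variables. -/
def msubst : Frm Act → (ℕ → Frm Act) → Frm Act
  | .tt, _ => .tt
  | .ff, _ => .ff
  | .var X, σ => σ X
  | .conj n f, σ => .conj n fun i => msubst (f i) σ
  | .box G k, σ => .box G fun a => msubst (k a) σ
  | .max X φ, σ => .max X (msubst φ (Function.update σ X (.var X)))

lemma fv_msubst : ∀ (φ : Frm Act) (σ : ℕ → Frm Act),
    (msubst φ σ).fv ⊆ ⋃ Y ∈ φ.fv, (σ Y).fv := by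
  intro φ
  induction φ with
  | tt => intro σ; simp [msubst, Frm.fv]
  | ff => intro σ; simp [msubst, Frm.fv]
  | var X => intro σ; simp [msubst, Frm.fv]
  | conj n f ih =>
    intro σ x hx
    simp only [msubst, Frm.fv, Set.mem_iUnion] at hx ⊢
    obtain ⟨i, hi⟩ := hx
    obtain ⟨Y, hY, hY2⟩ := by simpa [Set.mem_iUnion] using ih i σ hi
    exact ⟨Y, ⟨i, hY⟩, hY2⟩
  | box G k ih =>
    intro σ x hx
    simp only [msubst, Frm.fv, Set.mem_iUnion] at hx ⊢
    obtain ⟨a, ha, hi⟩ := hx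
    obtain ⟨Y, hY, hY2⟩ := by simpa [Set.mem_iUnion] using ih a σ hi
    exact ⟨Y, ⟨a, ha, hY⟩, hY2⟩
  | max X ψ ih =>
    intro σ x hx
    simp only [msubst, Frm.fv, Set.mem_diff, Set.mem_singleton_iff] at hx
    obtain ⟨hx1, hx2⟩ := hx
    obtain ⟨Y, hY, hY2⟩ := by
      simpa [Set.mem_iUnion] using ih (Function.update σ X (.var X)) hx1
    by_cases hYX : Y = X
    · subst hYX
      simp only [Function.update_self, Frm.fv, Set.mem_singleton_iff] at hY2
      exact absurd hY2 hx2
    · rw [Function.update_of_ne hYX] at hY2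
      simp only [Frm.fv, Set.mem_iUnion]
      exact ⟨Y, ⟨hY, hYX⟩, hY2⟩

/-- Substitution composition up to similarity. -/
lemma subst_msubst_sim {χ : Frm Act} {X : ℕ} :
    ∀ (φ : Frm Act) (σ : ℕ → Frm Act),
      (∀ Y ∈ φ.fv, Y ≠ X → X ∉ (σ Y).fv) →
      Sim (Frm.subst (msubst φ (Function.update σ X (.var X))) X χ)
        (msubst φ (Function.update σ X χ)) := by
  intro φ
  induction φ with
  | tt => intro σ h; exact .tt
  | ff => intro σ h; exact .ff
  | var Y =>
    intro σ h
    by_cases hYX : Y = X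
    · subst hYX
      simp only [msubst, Function.update_self, Frm.subst, if_pos rfl]
      exact Sim.refl _
    · simp only [msubst, Function.update_of_ne hYX]
      exact subst_not_free_sim (h Y rfl hYX)
  | conj n f ih =>
    intro σ h
    simp only [msubst, Frm.subst]
    refine .conj fun i => ih i σ fun Y hY hne => h Y ?_ hne
    exact Set.mem_iUnion.2 ⟨i, hY⟩
  | box G k ih =>
    intro σ h
    simp only [msubst, Frm.subst]
    refine .box fun a ha => ih a σ fun Y hY hne => h Y ?_ hne
    simp only [Frm.fv, Set.mem_iUnion]
    exact ⟨a, ha, hY⟩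
  | max Y ψ ih =>
    intro σ h
    by_cases hYX : Y = X
    · subst hYX
      simp only [msubst, Function.update_idem, Frm.subst, if_pos rfl]
      exact Sim.refl _
    · simp only [msubst, Frm.subst, if_neg hYX,
        Function.update_comm (fun hh : X = Y => hYX hh.symm)]
      refine .max ?_
      have := ih (Function.update σ Y (.var Y)) ?_
      · exact this
      · intro Z hZ hne
        by_cases hZY : Z = Y
        · subst hZY
          rw [Function.update_self]
          simp only [Frm.fv, Set.mem_singleton_iff]
          exact fun hh => hYX hh.symm
        · rw [Function.update_of_ne hZY]
          refine h Z ?_ hne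
          simp only [Frm.fv, Set.mem_diff, Set.mem_singleton_iff]
          exact ⟨hZ, hZY⟩

lemma msubst_id_sim : ∀ (φ : Frm Act) (σ : ℕ → Frm Act),
    (∀ Y ∈ φ.fv, σ Y = .var Y) → Sim (msubst φ σ) φ := by
  intro φ
  induction φ with
  | tt => intro σ h; exact .tt
  | ff => intro σ h; exact .ff
  | var X =>
    intro σ h
    rw [msubst, h X rfl]
    exact .var X
  | conj n f ih =>
    intro σ h
    refine .conj fun i => ih i σ fun Y hY => h Y (Set.mem_iUnion.2 ⟨i, hY⟩)
  | box G k ih =>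
    intro σ h
    refine .box fun a ha => ih a σ fun Y hY => h Y ?_
    simp only [Frm.fv, Set.mem_iUnion]
    exact ⟨a, ha, hY⟩
  | max X ψ ih =>
    intro σ h
    refine .max (ih _ fun Y hY => ?_)
    by_cases hYX : Y = X
    · subst hYX; exact Function.update_self ..
    · rw [Function.update_of_ne hYX]
      refine h Y ?_
      simp only [Frm.fv, Set.mem_diff, Set.mem_singleton_iff]
      exact ⟨hY, hYX⟩

/-- Key lemma: states that exhibit no violating trace belong to the
semantics. -/
lemma no_viol_mem_sem (L : LTS Act) :
    ∀ (φ : Frm Act) (σ : ℕ → Frm Act) (ρ : ℕ → Set L.S),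
      (∀ Y ∈ φ.fv, (σ Y).Closed) →
      (∀ Y ∈ φ.fv, ∀ q : L.S, (¬ ∃ t, Viol L q t (σ Y)) → q ∈ ρ Y) →
      ∀ p : L.S, (¬ ∃ t, Viol L p t (msubst φ σ)) → p ∈ sem L φ ρ := by
  intro φ
  induction φ with
  | tt => intro σ ρ _ _ p _; trivial
  | ff =>
    intro σ ρ _ _ p hp
    exact absurd ⟨[], .ff p⟩ hp
  | var X =>
    intro σ ρ _ hρ p hp
    exact hρ X rfl p hp
  | conj n f ih =>
    intro σ ρ hcl hρ p hp
    refine Set.mem_iInter.2 fun i => ?_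
    refine ih i σ ρ (fun Y hY => hcl Y (Set.mem_iUnion.2 ⟨i, hY⟩))
      (fun Y hY => hρ Y (Set.mem_iUnion.2 ⟨i, hY⟩)) p ?_
    rintro ⟨t, hv⟩
    exact hp ⟨t, .conj i hv⟩
  | box G k ih =>
    intro σ ρ hcl hρ p hp
    intro a ha q hq
    have hmem : ∀ Y ∈ (k a).fv, Y ∈ (Frm.box G k).fv := by
      intro Y hY
      simp only [Frm.fv, Set.mem_iUnion]
      exact ⟨a, ha, hY⟩
    refine ih a σ ρ (fun Y hY => hcl Y (hmem Y hY))
      (fun Y hY => hρ Y (hmem Y hY)) q ?_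
    rintro ⟨t, hv⟩
    exact hp ⟨a :: t, .box ha hq hv⟩
  | max X ψ ih =>
    intro σ ρ hcl hρ p hp
    set ψ' : Frm Act := msubst ψ (Function.update σ X (.var X)) with hψ'
    set S : Set L.S := {q | ¬ ∃ t, Viol L q t (.max X ψ')} with hS
    have hclosedmax : (Frm.max X ψ' : Frm Act).Closed := by
      have h1 : ψ'.fv ⊆ {X} := by
        intro x hx
        have := fv_msubst ψ (Function.update σ X (.var X)) hx
        simp only [Set.mem_iUnion] at this
        obtain ⟨Y, hY, hY2⟩ := this
        by_cases hYX : Y = X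
        · subst hYX
          simpa [Frm.fv] using hY2
        · rw [Function.update_of_ne hYX] at hY2
          have : (σ Y).Closed := by
            refine hcl Y ?_
            simp only [Frm.fv, Set.mem_diff, Set.mem_singleton_iff]
            exact ⟨hY, hYX⟩
          rw [Frm.Closed] at this
          rw [this] at hY2
          exact absurd hY2 (Set.notMem_empty x)
      rw [Frm.Closed]
      simp only [Frm.fv]
      rw [Set.diff_eq_empty]
      exact h1
    have hsub : S ⊆ sem L ψ (Function.update ρ X S) := by
      intro q hq
      refine ih (Function.update σ X (.max X ψ')) (Function.update ρ X S)
        ?_ ?_ q ?_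
      · intro Y hY
        by_cases hYX : Y = X
        · subst hYX; rw [Function.update_self]; exact hclosedmax
        · rw [Function.update_of_ne hYX]
          refine hcl Y ?_
          simp only [Frm.fv, Set.mem_diff, Set.mem_singleton_iff]
          exact ⟨hY, hYX⟩
      · intro Y hY q' hq'
        by_cases hYX : Y = X
        · subst hYX
          rw [Function.update_self] at hq' ⊢
          exact hq'
        · rw [Function.update_of_ne hYX] at hq' ⊢
          refine hρ Y ?_ q' hq'
          simp only [Frm.fv, Set.mem_diff, Set.mem_singleton_iff]
          exact ⟨hY, hYX⟩
      · rintro ⟨t, hv⟩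
        have hsim : Sim (msubst ψ (Function.update σ X (.max X ψ')))
            (Frm.subst ψ' X (.max X ψ')) := by
          refine Sim.symm (subst_msubst_sim ψ σ fun Y hY hne => ?_)
          have : (σ Y).Closed := by
            refine hcl Y ?_
            simp only [Frm.fv, Set.mem_diff, Set.mem_singleton_iff]
            exact ⟨hY, hne⟩
          rw [Frm.Closed] at this
          rw [this]
          exact Set.notMem_empty X
        have hv' : Viol L q t (Frm.subst ψ' X (.max X ψ')) := viol_sim hv hsim
        exact hq ⟨t, .max hv'⟩
    exact Set.mem_sUnion.2 ⟨S, hsub, hp⟩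

/-- second violating-trace-semantics condition: if p ∉ ⟦φ⟧ then
there is a trace t with p ⊨v^t φ. -/
theorem violating_trace_cond2 (Act : Type) (L : LTS Act) (φ : Frm Act)
    (hclosed : φ.Closed) (p : L.S) (hnsat : p ∉ Sem L φ) :
    ∃ t : List Act, Viol L p t φ := by
  by_contra hno
  apply hnsat
  have hsim : Sim (msubst φ fun _ => Frm.ff) φ := by
    refine msubst_id_sim φ _ fun Y hY => ?_
    rw [Frm.Closed] at hclosed
    rw [hclosed] at hY
    exact absurd hY (Set.notMem_empty Y)
  refine no_viol_mem_sem L φ (fun _ => Frm.ff) (fun _ => ∅)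
    ?_ ?_ p ?_
  · intro Y hY
    rw [Frm.Closed] at hclosed
    rw [hclosed] at hY
    exact absurd hY (Set.notMem_empty Y)
  · intro Y hY
    rw [Frm.Closed] at hclosed
    rw [hclosed] at hY
    exact absurd hY (Set.notMem_empty Y)
  · rintro ⟨t, hv⟩
    exact hno ⟨t, viol_sim hv hsim⟩

end Enf
end
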